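/- Let G be a group and H a subgroup such that H is amenable and there exists a G-invariant mean on ℓ^∞(G/H) (i.e., G acts amenably on the homogeneous space G/H). Then G is amenable. -/

import Mathlib

/-- The space `ℓ^∞(X)` of bounded real-valued functions on a set `X`,
as a submodule of `X → ℝ`. -/
def ellInfty (X : Type*) : Submodule ℝ (X → ℝ) where
  carrier := {f | ∃ C, ∀ x, |f x| ≤ C}
  add_mem' := by
    rintro f g ⟨C, hC⟩ ⟨D, hD⟩
    exact ⟨C + D, fun x => (abs_add_le _ _).trans (add_le_add (hC x) (hD x))⟩
  zero_mem' := ⟨0, fun x => by simp⟩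
  smul_mem' := by
    rintro c f ⟨C, hC⟩
    exact ⟨|c| * C, fun x => by
      simpa [abs_mul] using mul_le_mul_of_nonneg_left (hC x) (abs_nonneg c)⟩

/-- The constant function `1` as an element of `ℓ^∞(X)`. -/
def oneFn (X : Type*) : ellInfty X := ⟨fun _ => 1, ⟨1, fun _ => by norm_num⟩⟩

/-- A mean on `ℓ^∞(X)`: a positive unital linear functional. -/
def IsMean {X : Type*} (m : ellInfty X →ₗ[ℝ] ℝ) : Prop :=
  (∀ f : ellInfty X, (∀ x, 0 ≤ f.1 x) → 0 ≤ m f) ∧ m (oneFn X) = 1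

/-- The action of `g : G` on `ℓ^∞(X)` induced by an action of `G` on `X`:
`(g · f)(x) = f(g⁻¹ • x)`. -/
def actL {G X : Type*} [Group G] [MulAction G X] (g : G) (f : ellInfty X) : ellInfty X :=
  ⟨fun x => f.1 (g⁻¹ • x), by obtain ⟨C, hC⟩ := f.2; exact ⟨C, fun x => hC _⟩⟩

/-- Existence of a `G`-invariant mean on `ℓ^∞(X)`. -/
def HasInvMean (G X : Type*) [Group G] [MulAction G X] : Prop :=
  ∃ m : ellInfty X →ₗ[ℝ] ℝ, IsMean m ∧ ∀ (g : G) (f : ellInfty X), m (actL g f) = m f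

/-- A group is amenable if there is a left-translation-invariant mean on `ℓ^∞(G)`. -/
def Amenable (G : Type*) [Group G] : Prop := HasInvMean G G

/-- A mean of a function bounded by `C` is bounded by `C`. -/
lemma mean_abs_le {X : Type*} {m : ellInfty X →ₗ[ℝ] ℝ} (hm : IsMean m)
    (f : ellInfty X) {C : ℝ} (h : ∀ x, |f.1 x| ≤ C) : |m f| ≤ C := by
  have h1 : 0 ≤ m (C • oneFn X - f) := by
    refine hm.1 _ (fun x => ?_)
    have := (abs_le.mp (h x)).2
    simp only [Submodule.coe_sub, Submodule.coe_smul, oneFn, Pi.sub_apply, Pi.smul_apply,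
      smul_eq_mul, mul_one]
    linarith
  have h2 : 0 ≤ m (C • oneFn X + f) := by
    refine hm.1 _ (fun x => ?_)
    have := (abs_le.mp (h x)).1
    simp only [Submodule.coe_add, Submodule.coe_smul, oneFn, Pi.add_apply, Pi.smul_apply,
      smul_eq_mul, mul_one]
    linarith
  rw [map_sub, map_smul, hm.2, smul_eq_mul, mul_one] at h1
  rw [map_add, map_smul, hm.2, smul_eq_mul, mul_one] at h2
  rw [abs_le]; constructor <;> linarith

/-- Restriction of `f ∈ ℓ^∞(G)` to the coset `gH`, as an element of `ℓ^∞(H)`. -/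
def phiAux {G : Type*} [Group G] (H : Subgroup G) (f : ellInfty G) (g : G) : ellInfty H :=
  ⟨fun h => f.1 (g * (h : G)), by obtain ⟨C, hC⟩ := f.2; exact ⟨C, fun h => hC _⟩⟩

lemma mean_phiAux_coset {G : Type*} [Group G] (H : Subgroup G)
    {mH : ellInfty H →ₗ[ℝ] ℝ} (mHinv : ∀ (h : H) (φ : ellInfty H), mH (actL h φ) = mH φ)
    (f : ellInfty G) {g₁ g₂ : G} (hg : (g₁ : G ⧸ H) = (g₂ : G ⧸ H)) :
    mH (phiAux H f g₁) = mH (phiAux H f g₂) := by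
  have hmem : g₁⁻¹ * g₂ ∈ H := (QuotientGroup.eq.mp hg)
  set h₀ : H := ⟨g₁⁻¹ * g₂, hmem⟩
  have key : phiAux H f g₂ = actL h₀⁻¹ (phiAux H f g₁) := by
    apply Subtype.ext
    funext h
    show f.1 (g₂ * (h : G)) = f.1 (g₁ * (((h₀⁻¹)⁻¹ • h : H) : G))
    have : (((h₀⁻¹)⁻¹ • h : H) : G) = (g₁⁻¹ * g₂) * (h : G) := by
      simp [h₀, smul_eq_mul]
    rw [this]
    group
  rw [key, mHinv]

/-- if `H ≤ G` is amenable and there is a `G`-invariant mean on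
`ℓ^∞(G/H)`, then `G` is amenable. -/
theorem amenable_of_amenable_subgroup_and_invariant_mean_on_quotient
    {G : Type*} [Group G] (H : Subgroup G)
    (hH : Amenable H) (hGH : HasInvMean G (G ⧸ H)) : Amenable G := by
  obtain ⟨mH, hmH, mHinv⟩ := hH
  obtain ⟨μ, hμ, μinv⟩ := hGH
  -- Given f ∈ ℓ^∞(G), define Fbar : G/H → ℝ by averaging over cosets with mH.
  have Fbar_mem : ∀ f : ellInfty G,
      (fun x : G ⧸ H => mH (phiAux H f x.out)) ∈ ellInfty (G ⧸ H) := by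
    intro f
    obtain ⟨C, hC⟩ := f.2
    exact ⟨C, fun x => mean_abs_le hmH _ (fun h => hC _)⟩
  set Fbar : ellInfty G → ellInfty (G ⧸ H) :=
    fun f => ⟨fun x => mH (phiAux H f x.out), Fbar_mem f⟩ with hFbar
  -- Fbar is linear
  have phi_add : ∀ (f₁ f₂ : ellInfty G) (g : G),
      phiAux H (f₁ + f₂) g = phiAux H f₁ g + phiAux H f₂ g := by
    intro f₁ f₂ g; apply Subtype.ext; funext h; rfl
  have phi_smul : ∀ (c : ℝ) (f : ellInfty G) (g : G),
      phiAux H (c • f) g = c • phiAux H f g := by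
    intro c f g; apply Subtype.ext; funext h; rfl
  set M : ellInfty G →ₗ[ℝ] ℝ :=
    { toFun := fun f => μ (Fbar f)
      map_add' := by
        intro f₁ f₂
        have : Fbar (f₁ + f₂) = Fbar f₁ + Fbar f₂ := by
          apply Subtype.ext; funext x
          show mH (phiAux H (f₁ + f₂) x.out) = mH (phiAux H f₁ x.out) + mH (phiAux H f₂ x.out)
          rw [phi_add, map_add]
        show μ (Fbar (f₁ + f₂)) = μ (Fbar f₁) + μ (Fbar f₂)
        rw [this, map_add]
      map_smul' := by
        intro c f
        have : Fbar (c • f) = c • Fbar f := by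
          apply Subtype.ext; funext x
          show mH (phiAux H (c • f) x.out) = c • mH (phiAux H f x.out)
          rw [phi_smul, map_smul]
        show μ (Fbar (c • f)) = c • μ (Fbar f)
        rw [this, map_smul] } with hM
  refine ⟨M, ⟨?_, ?_⟩, ?_⟩
  · -- positivity
    intro f hf
    refine hμ.1 _ (fun x => ?_)
    exact hmH.1 _ (fun h => hf _)
  · -- unitality
    show μ (Fbar (oneFn G)) = 1
    have : Fbar (oneFn G) = oneFn (G ⧸ H) := by
      apply Subtype.ext; funext x
      show mH (phiAux H (oneFn G) x.out) = 1
      have : phiAux H (oneFn G) x.out = oneFn H := by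
        apply Subtype.ext; funext h; rfl
      rw [this, hmH.2]
    rw [this, hμ.2]
  · -- invariance
    intro g f
    show μ (Fbar (actL g f)) = μ (Fbar f)
    have key : Fbar (actL g f) = actL g (Fbar f) := by
      apply Subtype.ext; funext x
      show mH (phiAux H (actL g f) x.out) = mH (phiAux H f (g⁻¹ • x).out)
      have h1 : phiAux H (actL g f) x.out = phiAux H f (g⁻¹ * x.out) := by
        apply Subtype.ext; funext h
        show f.1 (g⁻¹ • (x.out * (h : G))) = f.1 (g⁻¹ * x.out * (h : G))
        rw [smul_eq_mul, mul_assoc]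
      rw [h1]
      apply mean_phiAux_coset H mHinv
      show QuotientGroup.mk (g⁻¹ * x.out) = QuotientGroup.mk (g⁻¹ • x).out
      rw [QuotientGroup.out_eq']
      conv_rhs => rw [← QuotientGroup.out_eq' x]
      rfl
    rw [key, μinv]
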